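/- Let λ* > 0 and let (c*, Q*) be a spectral pair at λ* satisfying c* ≥ λ*(θmax + θmin). Then there exists δ > 0 such that every solution (c, μ) of the travelling-wave equation with 0 ≤ c ≤ c*, whose density ν is bounded on ℝ and satisfies inf_{ξ ∈ ℝ} ν(ξ) > 0, in fact satisfies inf_{ξ ∈ ℝ} ν(ξ) ≥ δ. -/

import Mathlib

set_option maxHeartbeats 1000000

open Set Filter MeasureTheory Topology

private lemma antiOn16 (f f' : ℝ → ℝ) (hf : ∀ t, HasDerivAt f (f' t) t) {x y : ℝ}
    (hxy : x ≤ y) (hle : ∀ t, x < t → t < y → f' t ≤ 0) : f y ≤ f x := by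
  have hcont : ContinuousOn f (Icc x y) := fun t _ => (hf t).continuousAt.continuousWithinAt
  have hdiff : DifferentiableOn ℝ f (interior (Icc x y)) := fun t _ =>
    (hf t).differentiableAt.differentiableWithinAt
  have h := antitoneOn_of_deriv_nonpos (convex_Icc x y) hcont hdiff ?_
  · exact h (left_mem_Icc.2 hxy) (right_mem_Icc.2 hxy) hxy
  · intro t ht
    rw [interior_Icc] at ht
    rw [(hf t).deriv]
    exact hle t ht.1 ht.2

private lemma monoOn16 (f f' : ℝ → ℝ) (hf : ∀ t, HasDerivAt f (f' t) t) {x y : ℝ}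
    (hxy : x ≤ y) (hle : ∀ t, x < t → t < y → 0 ≤ f' t) : f x ≤ f y := by
  have hcont : ContinuousOn f (Icc x y) := fun t _ => (hf t).continuousAt.continuousWithinAt
  have hdiff : DifferentiableOn ℝ f (interior (Icc x y)) := fun t _ =>
    (hf t).differentiableAt.differentiableWithinAt
  have h := monotoneOn_of_deriv_nonneg (convex_Icc x y) hcont hdiff ?_
  · exact h (left_mem_Icc.2 hxy) (right_mem_Icc.2 hxy) hxy
  · intro t ht
    rw [interior_Icc] at ht
    rw [(hf t).deriv]
    exact hle t ht.1 ht.2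

private lemma key16 (θa θb c s k pm : ℝ) (P J v : ℝ → ℝ)
    (hθa : 0 < θa) (hab : θa ≤ θb) (hc : 0 ≤ c) (hs : 0 < s) (hk : 0 < k) (hpm : 0 < pm)
    (hPc : Continuous P)
    (hJd : ∀ ξ, HasDerivAt J (v ξ - c * P ξ) ξ)
    (hvd : ∀ ξ : ℝ, ∃ w, HasDerivAt v w ξ ∧ w ≤ k * P ξ ^ 2 - s * P ξ)
    (hJ1 : ∀ ξ, θa * P ξ ≤ J ξ) (hJ2 : ∀ ξ, J ξ ≤ θb * P ξ)
    (hPm : ∀ ξ, pm ≤ P ξ)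
    (ξ₀ : ℝ) : θa ^ 2 * (s / (2 * k)) / (8 * θb ^ 2) ≤ P ξ₀ := by
  by_contra hcon
  push_neg at hcon
  have hθb : 0 < θb := lt_of_lt_of_le hθa hab
  obtain ⟨p₀, hp₀def⟩ : ∃ p₀ : ℝ, p₀ = s / (2 * k) := ⟨_, rfl⟩
  rw [← hp₀def] at hcon
  obtain ⟨δ₀, hδ₀def⟩ : ∃ δ₀ : ℝ, δ₀ = θa ^ 2 * p₀ / (8 * θb ^ 2) := ⟨_, rfl⟩
  rw [← hδ₀def] at hcon
  obtain ⟨η, hηdef⟩ : ∃ η : ℝ, η = θb * δ₀ := ⟨_, rfl⟩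
  obtain ⟨β, hβdef⟩ : ∃ β : ℝ, β = s * pm / 2 := ⟨_, rfl⟩
  have hp₀ : 0 < p₀ := hp₀def ▸ div_pos hs (by linarith)
  have hδ₀ : 0 < δ₀ := hδ₀def ▸ div_pos (mul_pos (pow_pos hθa 2) hp₀)
    (by nlinarith [pow_pos hθb 2])
  have hη : 0 < η := hηdef ▸ mul_pos hθb hδ₀
  have hβ : 0 < β := hβdef ▸ div_pos (mul_pos hs hpm) two_pos
  have hkp₀ : k * p₀ = s / 2 := by rw [hp₀def]; field_simp
  have h8 : 8 * θb ^ 2 * δ₀ = θa ^ 2 * p₀ := by rw [hδ₀def]; field_simp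
  have hP0 : ∀ t, 0 < P t := fun t => lt_of_lt_of_le hpm (hPm t)
  have hJpos : ∀ t, 0 < J t := fun t => lt_of_lt_of_le (mul_pos hθa (hP0 t)) (hJ1 t)
  choose w hw hwle using hvd
  have hJc : Continuous J := by
    have : Differentiable ℝ J := fun t => (hJd t).differentiableAt
    exact this.continuous
  -- numeric facts
  have hδ₀p₀ : δ₀ < p₀ := by
    nlinarith [h8, pow_pos hθb 2, mul_pos (pow_pos hθb 2) hp₀,
      mul_pos (pow_pos hθa 2) hp₀,
      mul_le_mul_of_nonneg_right (pow_le_pow_left₀ hθa.le hab 2) hp₀.le]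
  have hkeynum : η < θa * p₀ := by
    have h1 : θa * η < θa * (θa * p₀) := by
      nlinarith [mul_pos (mul_pos hθb hδ₀) (show (0:ℝ) < 8 * θb - θa by linarith), h8]
    exact lt_of_mul_lt_mul_left h1 hθa.le
  have hPξ₀ : P ξ₀ < δ₀ := hcon
  -- v decay on low regions
  have M1 : ∀ x y : ℝ, x ≤ y → (∀ t, x ≤ t → t ≤ y → P t ≤ p₀) →
      v y ≤ v x - β * (y - x) := by
    intro x y hxy hreg
    have h := antiOn16 (fun t => v t + β * t) (fun t => w t + β * 1)
      (fun t => (hw t).add ((hasDerivAt_id t).const_mul β)) hxy ?_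
    · linarith
    · intro t ht1 ht2
      show w t + β * 1 ≤ 0
      have hP1 : P t ≤ p₀ := hreg t ht1.le ht2.le
      have hP2 : pm ≤ P t := hPm t
      have hwt := hwle t
      have h1 : k * P t ^ 2 ≤ k * p₀ * P t := by
        nlinarith [mul_nonneg (mul_nonneg hk.le (hP0 t).le) (sub_nonneg.2 hP1)]
      have h2 : k * p₀ * P t = s / 2 * P t := by rw [hkp₀]
      have h3 : s / 2 * pm ≤ s / 2 * P t := by nlinarith
      rw [hβdef]
      linarith
  -- rightward collapse
  have rightStep : ∀ x : ℝ, v x ≤ 0 → (∀ t, x ≤ t → P t < p₀) → False := by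
    intro x hvx hreg
    have hM1 : ∀ t, x ≤ t → v t ≤ v x - β * (t - x) := fun t ht =>
      M1 x t ht (fun u hu1 _ => (hreg u hu1).le)
    have hφd : ∀ t, HasDerivAt (fun u => J u + β / 2 * (u - x) ^ 2)
        ((v t - c * P t) + β / 2 * (2 * (t - x) ^ 1 * 1)) t := fun t =>
      (hJd t).add ((((hasDerivAt_id t).sub_const x).pow 2).const_mul (β / 2))
    obtain ⟨T, hTdef⟩ : ∃ T : ℝ, T = max 1 (2 * J x / β) := ⟨_, rfl⟩
    have hT1 : (1:ℝ) ≤ T := hTdef ▸ le_max_left _ _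
    have hT2' : 2 * J x ≤ T * β := by
      have h := le_max_right 1 (2 * J x / β)
      rw [← hTdef] at h
      rwa [div_le_iff₀ hβ] at h
    have hxy : x ≤ x + T := by linarith
    have hanti := antiOn16 _ _ hφd hxy ?_
    · simp only [add_sub_cancel_left] at hanti
      have hJx0 : 0 ≤ J x := (hJpos x).le
      have hq : J x ≤ β / 2 * T ^ 2 := by
        nlinarith [mul_nonneg (mul_nonneg (by linarith : (0:ℝ) ≤ T)
          (by linarith : (0:ℝ) ≤ T - 1)) hβ.le]
      have hcontr : J (x + T) ≤ 0 := by nlinarith [hanti]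
      exact absurd hcontr (not_le.2 (hJpos (x + T)))
    · intro t ht1 ht2
      show (v t - c * P t) + β / 2 * (2 * (t - x) ^ 1 * 1) ≤ 0
      have hvt := hM1 t ht1.le
      have := mul_nonneg hc (hP0 t).le
      have h2 : β / 2 * (2 * (t - x) ^ 1 * 1) = β * (t - x) := by ring
      rw [h2]
      linarith
  rcases le_or_gt (v ξ₀) 0 with hv₀ | hv₀
  · -- Case 1
    by_cases hSr : ({ξ : ℝ | ξ₀ ≤ ξ ∧ p₀ ≤ P ξ}).Nonempty
    · have hSrclosed : IsClosed {ξ : ℝ | ξ₀ ≤ ξ ∧ p₀ ≤ P ξ} :=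
        IsClosed.inter (isClosed_le continuous_const continuous_id)
          (isClosed_le continuous_const hPc)
      have hSrbdd : BddBelow {ξ : ℝ | ξ₀ ≤ ξ ∧ p₀ ≤ P ξ} := ⟨ξ₀, fun t ht => ht.1⟩
      set b := sInf {ξ : ℝ | ξ₀ ≤ ξ ∧ p₀ ≤ P ξ} with hbdef
      have hbmem : b ∈ {ξ : ℝ | ξ₀ ≤ ξ ∧ p₀ ≤ P ξ} := hSrclosed.csInf_mem hSr hSrbdd
      have hξ₀b : ξ₀ < b := by
        rcases lt_or_eq_of_le hbmem.1 with h | h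
        · exact h
        · exfalso; rw [← h] at hbmem; exact absurd hbmem.2 (not_le.2 (lt_trans hPξ₀ hδ₀p₀))
      have hregb : ∀ t, ξ₀ ≤ t → t < b → P t < p₀ := by
        intro t ht1 ht2
        by_contra hP
        push_neg at hP
        exact absurd (csInf_le hSrbdd ⟨ht1, hP⟩) (not_le.2 ht2)
      have hJb : J b ≤ J ξ₀ := by
        apply antiOn16 J (fun t => v t - c * P t) hJd hξ₀b.le
        intro t ht1 ht2
        have hvt : v t ≤ v ξ₀ - β * (t - ξ₀) :=
          M1 ξ₀ t ht1.le (fun u hu1 hu2 => (hregb u hu1 (lt_of_le_of_lt hu2 ht2)).le)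
        have h1 := mul_nonneg hc (hP0 t).le
        have h2 : 0 ≤ β * (t - ξ₀) := mul_nonneg hβ.le (by linarith)
        linarith
      have h1 : J ξ₀ < η := lt_of_le_of_lt (hJ2 ξ₀) (by rw [hηdef]; nlinarith)
      have h2 : θa * p₀ ≤ J b := le_trans (by nlinarith [hbmem.2] : θa * p₀ ≤ θa * P b) (hJ1 b)
      linarith
    · apply rightStep ξ₀ hv₀
      intro t ht
      by_contra hP
      push_neg at hP
      exact hSr ⟨t, ht, hP⟩
  · -- Case 2 : v ξ₀ > 0
    obtain ⟨τ, hτdef⟩ : ∃ τ : ℝ, τ = 4 * c * η / θa := ⟨_, rfl⟩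
    have hθane : θa ≠ 0 := ne_of_gt hθa
    have hτθa : θa * τ = 4 * c * η := by rw [hτdef]; field_simp
    have hJξ₀η : J ξ₀ < η := by
      refine lt_of_le_of_lt (hJ2 ξ₀) ?_
      rw [hηdef]
      exact mul_lt_mul_of_pos_left hPξ₀ hθb
    rcases le_or_gt τ (v ξ₀) with hcase | hcase
    · -- Case 2a : τ ≤ v ξ₀, go left
      have leftStep : ∀ x, x ≤ ξ₀ → (∀ t, x ≤ t → t ≤ ξ₀ → P t < p₀) →
          J x ≤ J ξ₀ - v ξ₀ / 2 * (ξ₀ - x) := by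
        intro x hx hreg
        have htrap : ∀ t, x ≤ t → t ≤ ξ₀ → J t < 2 * η := by
          by_contra hE
          push_neg at hE
          obtain ⟨t₂, ht₂1, ht₂2, ht₂3⟩ := hE
          have hEcomp : IsCompact (Icc x ξ₀ ∩ {t | 2 * η ≤ J t}) :=
            isCompact_Icc.inter_right (isClosed_le continuous_const hJc)
          have hEne : (Icc x ξ₀ ∩ {t | 2 * η ≤ J t}).Nonempty := ⟨t₂, ⟨ht₂1, ht₂2⟩, ht₂3⟩
          have hmem := hEcomp.sSup_mem hEne
          obtain ⟨ξ₂, hξ₂def⟩ : ∃ ξ₂ : ℝ, ξ₂ = sSup (Icc x ξ₀ ∩ {t | 2 * η ≤ J t}) := ⟨_, rfl⟩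
          rw [← hξ₂def] at hmem
          obtain ⟨⟨hξ₂x, hξ₂ξ₀⟩, hJξ₂⟩ := hmem
          have hJξ₂' : 2 * η ≤ J ξ₂ := hJξ₂
          have hξ₂lt : ξ₂ < ξ₀ := by
            rcases lt_or_eq_of_le hξ₂ξ₀ with h | h
            · exact h
            · exfalso; rw [h] at hJξ₂'; linarith
          have habove : ∀ t, ξ₂ < t → t ≤ ξ₀ → J t < 2 * η := by
            intro t h1 h2
            by_contra h3
            push_neg at h3
            have : t ≤ ξ₂ := by
              rw [hξ₂def]
              exact le_csSup hEcomp.bddAbove ⟨⟨le_trans hξ₂x h1.le, h2⟩, h3⟩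
            linarith
          have hmono : J ξ₂ ≤ J ξ₀ := by
            apply monoOn16 J (fun t => v t - c * P t) hJd hξ₂lt.le
            intro t ht1 ht2
            have hvt : v ξ₀ ≤ v t := by
              have h := M1 t ξ₀ ht2.le (fun u hu1 hu2 =>
                (hreg u (le_trans hξ₂x (le_trans ht1.le hu1)) hu2).le)
              have : 0 ≤ β * (ξ₀ - t) := mul_nonneg hβ.le (by linarith)
              linarith
            have hJt : J t < 2 * η := habove t ht1 ht2.le
            have hcP : c * P t ≤ v ξ₀ / 2 := by
              have h1 : c * (θa * P t) ≤ c * J t := mul_le_mul_of_nonneg_left (hJ1 t) hc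
              have h2 : c * J t ≤ c * (2 * η) := mul_le_mul_of_nonneg_left hJt.le hc
              have h3 : θa * τ ≤ θa * v ξ₀ := mul_le_mul_of_nonneg_left hcase hθa.le
              have h4 : θa * (c * P t) ≤ θa * (v ξ₀ / 2) := by nlinarith
              exact le_of_mul_le_mul_left h4 hθa
            linarith
          linarith
        have hf : ∀ t, HasDerivAt (fun u => J u - v ξ₀ / 2 * u)
            ((v t - c * P t) - v ξ₀ / 2 * 1) t := fun t =>
          (hJd t).sub ((hasDerivAt_id t).const_mul (v ξ₀ / 2))
        have hmono := monoOn16 _ _ hf hx ?_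
        · linarith
        · intro t ht1 ht2
          show 0 ≤ (v t - c * P t) - v ξ₀ / 2 * 1
          have hvt : v ξ₀ ≤ v t := by
            have h := M1 t ξ₀ ht2.le (fun u hu1 hu2 => (hreg u (le_trans ht1.le hu1) hu2).le)
            have : 0 ≤ β * (ξ₀ - t) := mul_nonneg hβ.le (by linarith)
            linarith
          have hJt : J t < 2 * η := htrap t ht1.le ht2.le
          have hcP : c * P t ≤ v ξ₀ / 2 := by
            have h1 : c * (θa * P t) ≤ c * J t := mul_le_mul_of_nonneg_left (hJ1 t) hc
            have h2 : c * J t ≤ c * (2 * η) := mul_le_mul_of_nonneg_left hJt.le hc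
            have h3 : θa * τ ≤ θa * v ξ₀ := mul_le_mul_of_nonneg_left hcase hθa.le
            have h4 : θa * (c * P t) ≤ θa * (v ξ₀ / 2) := by nlinarith
            exact le_of_mul_le_mul_left h4 hθa
          linarith
      by_cases hSl : ({ξ : ℝ | ξ ≤ ξ₀ ∧ p₀ ≤ P ξ}).Nonempty
      · have hSlclosed : IsClosed {ξ : ℝ | ξ ≤ ξ₀ ∧ p₀ ≤ P ξ} :=
          IsClosed.inter (isClosed_le continuous_id continuous_const)
            (isClosed_le continuous_const hPc)
        have hSlbdd : BddAbove {ξ : ℝ | ξ ≤ ξ₀ ∧ p₀ ≤ P ξ} := ⟨ξ₀, fun t ht => ht.1⟩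
        have hamem := hSlclosed.csSup_mem hSl hSlbdd
        obtain ⟨a, hadef⟩ : ∃ a : ℝ, a = sSup {ξ : ℝ | ξ ≤ ξ₀ ∧ p₀ ≤ P ξ} := ⟨_, rfl⟩
        rw [← hadef] at hamem
        have ha0 : a < ξ₀ := by
          rcases lt_or_eq_of_le hamem.1 with h | h
          · exact h
          · exfalso; rw [h] at hamem; exact absurd hamem.2 (not_le.2 (lt_trans hPξ₀ hδ₀p₀))
        have hrega : ∀ t, a < t → t ≤ ξ₀ → P t < p₀ := by
          intro t ht1 ht2
          by_contra hP
          push_neg at hP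
          have : t ≤ a := by rw [hadef]; exact le_csSup hSlbdd ⟨ht2, hP⟩
          linarith
        have hJle : ∀ x, a < x → x ≤ ξ₀ → J x ≤ η := by
          intro x hx1 hx2
          have h := leftStep x hx2 (fun t ht1 ht2 => hrega t (lt_of_lt_of_le hx1 ht1) ht2)
          have : 0 ≤ v ξ₀ / 2 * (ξ₀ - x) := mul_nonneg (by linarith) (by linarith)
          linarith
        have hJa : J a ≤ η := by
          have htend : Tendsto J (𝓝[>] a) (𝓝 (J a)) :=
            (hJc.tendsto a).mono_left nhdsWithin_le_nhds
          refine le_of_tendsto htend ?_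
          filter_upwards [Ioc_mem_nhdsGT_of_mem ⟨le_refl a, ha0⟩] with t ht
          exact hJle t ht.1 ht.2
        have h2 : θa * p₀ ≤ J a :=
          le_trans (mul_le_mul_of_nonneg_left hamem.2 hθa.le) (hJ1 a)
        linarith
      · have hreg : ∀ t, t ≤ ξ₀ → P t < p₀ := by
          intro t ht
          by_contra hP
          push_neg at hP
          exact hSl ⟨t, ht, hP⟩
        obtain ⟨T, hTdef⟩ : ∃ T : ℝ, T = max 1 (4 * J ξ₀ / v ξ₀) := ⟨_, rfl⟩
        have hT1 : (1:ℝ) ≤ T := hTdef ▸ le_max_left _ _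
        have hT2 : 4 * J ξ₀ ≤ T * v ξ₀ := by
          have h := le_max_right 1 (4 * J ξ₀ / v ξ₀)
          rw [← hTdef] at h
          rwa [div_le_iff₀ hv₀] at h
        have hx : ξ₀ - T ≤ ξ₀ := by linarith
        have h := leftStep (ξ₀ - T) hx (fun t ht1 ht2 => hreg t ht2)
        have h2 : J (ξ₀ - T) ≤ J ξ₀ - v ξ₀ / 2 * T := by
          have : ξ₀ - (ξ₀ - T) = T := by ring
          rw [this] at h
          exact h
        have h3 : 0 < J (ξ₀ - T) := hJpos _
        have h4 : 0 < J ξ₀ := hJpos _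
        nlinarith
    · -- Case 2b : 0 < v ξ₀ < τ
      have hcpos : 0 < c := by
        rcases lt_or_eq_of_le hc with h | h
        · exact h
        · exfalso
          have hτ0 : θa * τ = 0 := by rw [hτθa, ← h]; ring
          rcases mul_eq_zero.1 hτ0 with h1 | h1
          · exact hθane h1
          · rw [h1] at hcase; linarith
      obtain ⟨Jmax, hJmdef⟩ : ∃ Jm : ℝ, Jm = 4 * θb * η / θa := ⟨_, rfl⟩
      have hJm1 : θa * Jmax = 4 * θb * η := by rw [hJmdef]; field_simp
      have hcJm : c * Jmax = θb * τ := by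
        have h1 : θa * (c * Jmax) = θa * (θb * τ) := by
          linear_combination c * hJm1 - θb * hτθa
        exact mul_left_cancel₀ hθane h1
      have hηJm : η ≤ Jmax := by
        have h1 : θa * η ≤ θa * Jmax := by nlinarith
        exact le_of_mul_le_mul_left h1 hθa
      have hJmkey : Jmax < θa * p₀ := by
        have h1 : θa * Jmax < θa * (θa * p₀) := by
          nlinarith [hJm1, h8, mul_pos (pow_pos hθb 2) hδ₀, hηdef]
        exact lt_of_mul_lt_mul_left h1 hθa.le
      have trapR : ∀ y, ξ₀ ≤ y → (∀ t, ξ₀ ≤ t → t ≤ y → P t < p₀) → J y ≤ Jmax := by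
        intro y hy hreg
        by_contra hJy
        push_neg at hJy
        have hUcomp : IsCompact (Icc ξ₀ y ∩ {t | J t ≤ Jmax}) :=
          isCompact_Icc.inter_right (isClosed_le hJc continuous_const)
        have hUne : (Icc ξ₀ y ∩ {t | J t ≤ Jmax}).Nonempty :=
          ⟨ξ₀, ⟨le_refl ξ₀, hy⟩, by simp only [mem_setOf_eq]; linarith⟩
        have hmem := hUcomp.sSup_mem hUne
        obtain ⟨ξ₂, hξ₂def⟩ : ∃ ξ₂ : ℝ, ξ₂ = sSup (Icc ξ₀ y ∩ {t | J t ≤ Jmax}) := ⟨_, rfl⟩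
        rw [← hξ₂def] at hmem
        obtain ⟨⟨hξ₂ξ₀, hξ₂y⟩, hJξ₂⟩ := hmem
        have hJξ₂' : J ξ₂ ≤ Jmax := hJξ₂
        have hξ₂lt : ξ₂ < y := by
          rcases lt_or_eq_of_le hξ₂y with h | h
          · exact h
          · exfalso; rw [h] at hJξ₂'; linarith
        have habove : ∀ t, ξ₂ < t → t ≤ y → Jmax < J t := by
          intro t h1 h2
          by_contra h3
          push_neg at h3
          have : t ≤ ξ₂ := by
            rw [hξ₂def]
            exact le_csSup hUcomp.bddAbove ⟨⟨le_trans hξ₂ξ₀ h1.le, h2⟩, h3⟩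
          linarith
        have hanti : J y ≤ J ξ₂ := by
          apply antiOn16 J (fun t => v t - c * P t) hJd hξ₂lt.le
          intro t ht1 ht2
          have hvt : v t ≤ v ξ₀ := by
            have h := M1 ξ₀ t (le_trans hξ₂ξ₀ ht1.le)
              (fun u hu1 hu2 => (hreg u hu1 (le_trans hu2 ht2.le)).le)
            have : 0 ≤ β * (t - ξ₀) := mul_nonneg hβ.le (by linarith [le_trans hξ₂ξ₀ ht1.le])
            linarith
          have hcP : τ ≤ c * P t := by
            have h1 : c * Jmax ≤ c * J t :=
              mul_le_mul_of_nonneg_left (habove t ht1 ht2.le).le hc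
            have h2 : c * J t ≤ c * (θb * P t) := mul_le_mul_of_nonneg_left (hJ2 t) hc
            have h3 : θb * τ ≤ θb * (c * P t) := by nlinarith [hcJm]
            exact le_of_mul_le_mul_left h3 hθb
          linarith
        linarith
      by_cases hSr : ({ξ : ℝ | ξ₀ ≤ ξ ∧ p₀ ≤ P ξ}).Nonempty
      · have hSrclosed : IsClosed {ξ : ℝ | ξ₀ ≤ ξ ∧ p₀ ≤ P ξ} :=
          IsClosed.inter (isClosed_le continuous_const continuous_id)
            (isClosed_le continuous_const hPc)
        have hSrbdd : BddBelow {ξ : ℝ | ξ₀ ≤ ξ ∧ p₀ ≤ P ξ} := ⟨ξ₀, fun t ht => ht.1⟩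
        have hbmem := hSrclosed.csInf_mem hSr hSrbdd
        obtain ⟨b, hbdef⟩ : ∃ b : ℝ, b = sInf {ξ : ℝ | ξ₀ ≤ ξ ∧ p₀ ≤ P ξ} := ⟨_, rfl⟩
        rw [← hbdef] at hbmem
        have hξ₀b : ξ₀ < b := by
          rcases lt_or_eq_of_le hbmem.1 with h | h
          · exact h
          · exfalso; rw [← h] at hbmem; exact absurd hbmem.2 (not_le.2 (lt_trans hPξ₀ hδ₀p₀))
        have hregb : ∀ t, ξ₀ ≤ t → t < b → P t < p₀ := by
          intro t ht1 ht2
          by_contra hP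
          push_neg at hP
          have : b ≤ t := by rw [hbdef]; exact csInf_le hSrbdd ⟨ht1, hP⟩
          linarith
        have hJy : ∀ y, ξ₀ ≤ y → y < b → J y ≤ Jmax := by
          intro y hy1 hy2
          exact trapR y hy1 (fun t ht1 ht2 => hregb t ht1 (lt_of_le_of_lt ht2 hy2))
        have hJb : J b ≤ Jmax := by
          have htend : Tendsto J (𝓝[<] b) (𝓝 (J b)) :=
            (hJc.tendsto b).mono_left nhdsWithin_le_nhds
          refine le_of_tendsto htend ?_
          filter_upwards [Ico_mem_nhdsLT_of_mem ⟨hξ₀b, le_refl b⟩] with t ht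
          exact hJy t ht.1 ht.2
        have h2 : θa * p₀ ≤ J b :=
          le_trans (mul_le_mul_of_nonneg_left hbmem.2 hθa.le) (hJ1 b)
        linarith
      · have hreg : ∀ t, ξ₀ ≤ t → P t < p₀ := by
          intro t ht
          by_contra hP
          push_neg at hP
          exact hSr ⟨t, ht, hP⟩
        have hβne : β ≠ 0 := ne_of_gt hβ
        have hv1 : v (ξ₀ + (v ξ₀ + 1) / β) ≤ 0 := by
          have hd : ξ₀ ≤ ξ₀ + (v ξ₀ + 1) / β := by
            have : 0 ≤ (v ξ₀ + 1) / β := div_nonneg (by linarith) hβ.le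
            linarith
          have h := M1 ξ₀ (ξ₀ + (v ξ₀ + 1) / β) hd (fun u hu1 _ => (hreg u hu1).le)
          have hcanc : β * ((v ξ₀ + 1) / β) = v ξ₀ + 1 := by field_simp
          have : β * (ξ₀ + (v ξ₀ + 1) / β - ξ₀) = v ξ₀ + 1 := by
            rw [show ξ₀ + (v ξ₀ + 1) / β - ξ₀ = (v ξ₀ + 1) / β by ring, hcanc]
          linarith
        apply rightStep (ξ₀ + (v ξ₀ + 1) / β) hv1
        intro t ht
        apply hreg
        have : 0 ≤ (v ξ₀ + 1) / β := div_nonneg (by linarith) hβ.le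
        linarith

private lemma integrableOn16 {a b : ℝ} {f : ℝ → ℝ} (hf : Continuous f) :
    IntegrableOn f (Ioo a b) :=
  (hf.continuousOn.integrableOn_Icc).mono_set Ioo_subset_Icc_self

private lemma derivUnder16 (a b : ℝ) (g : ℝ → ℝ) (u ud : ℝ → ℝ → ℝ) (M : ℝ)
    (hg : Continuous g)
    (huc : ∀ ξ, Continuous (u ξ)) (hudc : ∀ ξ, Continuous (ud ξ))
    (hud : ∀ θ ξ, HasDerivAt (fun x => u x θ) (ud ξ θ) ξ)
    (hbd : ∀ ξ θ, |ud ξ θ| ≤ M) (ξ₀ : ℝ) :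
    HasDerivAt (fun ξ => ∫ θ in Ioo a b, g θ * u ξ θ) (∫ θ in Ioo a b, g θ * ud ξ₀ θ) ξ₀ := by
  have h := hasDerivAt_integral_of_dominated_loc_of_deriv_le
    (μ := volume.restrict (Ioo a b))
    (F := fun ξ θ => g θ * u ξ θ) (F' := fun ξ θ => g θ * ud ξ θ)
    (bound := fun θ => |g θ| * M) (x₀ := ξ₀) (s := Metric.ball ξ₀ 1) (Metric.ball_mem_nhds ξ₀ one_pos)
    (Eventually.of_forall fun x => (hg.mul (huc x)).aestronglyMeasurable)
    (integrableOn16 (hg.mul (huc ξ₀)))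
    ((hg.mul (hudc ξ₀)).aestronglyMeasurable)
    (ae_of_all _ fun θ x _ => by
      rw [Real.norm_eq_abs, abs_mul]
      exact mul_le_mul_of_nonneg_left (hbd x θ) (abs_nonneg _))
    (integrableOn16 (hg.abs.mul continuous_const))
    (ae_of_all _ fun θ x _ => (hud θ x).const_mul (g θ))
  exact h.2

/-- A spectral pair `(c, Q)` at `lam` for parameters `thmin thmax alpha r`:
`Q` is positive, normalized, twice continuously differentiable, solves the eigenproblem
on `(thmin, thmax)` and satisfies Neumann boundary conditions. -/
def IsSpectralPair (thmin thmax alpha r lam c : ℝ) (Q : ℝ → ℝ) : Prop :=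
  ContDiff ℝ 2 Q ∧
  (∀ θ ∈ Set.Icc thmin thmax, 0 < Q θ) ∧
  (∫ θ in Set.Ioo thmin thmax, Q θ) = 1 ∧
  (∀ θ ∈ Set.Ioo thmin thmax,
    alpha * iteratedDeriv 2 Q θ + (-(lam * c) + θ * lam ^ 2 + r) * Q θ = 0) ∧
  deriv Q thmin = 0 ∧ deriv Q thmax = 0

/-- A solution of the travelling-wave equation with speed `c`: a nonnegative function,
twice continuously differentiable with bounded derivatives up to order two, solving the
equation on `ℝ × (thmin, thmax)` with Neumann boundary conditions in the trait variable. -/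
def IsTravellingWave (thmin thmax alpha r c : ℝ) (μ : ℝ → ℝ → ℝ) : Prop :=
  (∀ ξ : ℝ, ∀ θ ∈ Set.Icc thmin thmax, 0 ≤ μ ξ θ) ∧
  ContDiff ℝ 2 (Function.uncurry μ) ∧
  (∃ M : ℝ, ∀ i : ℕ, i ≤ 2 → ∀ p : ℝ × ℝ,
    ‖iteratedFDeriv ℝ i (Function.uncurry μ) p‖ ≤ M) ∧
  (∀ ξ : ℝ, ∀ θ ∈ Set.Ioo thmin thmax,
    -(c * deriv (fun x => μ x θ) ξ) - θ * iteratedDeriv 2 (fun x => μ x θ) ξ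
      - alpha * iteratedDeriv 2 (fun t => μ ξ t) θ
      = r * μ ξ θ * (1 - ∫ t in Set.Ioo thmin thmax, μ ξ t)) ∧
  (∀ ξ : ℝ, deriv (fun t => μ ξ t) thmin = 0 ∧ deriv (fun t => μ ξ t) thmax = 0)

theorem statement16 (thmin thmax alpha r : ℝ)
    (hth : 0 < thmin) (hthth : thmin < thmax) (halpha : 0 < alpha) (hr : 0 < r)
    (lamstar cstar : ℝ) (hlam : 0 < lamstar) (Qstar : ℝ → ℝ)
    (hQ : IsSpectralPair thmin thmax alpha r lamstar cstar Qstar)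
    (hcstar : lamstar * (thmax + thmin) ≤ cstar) :
    ∃ δ > (0 : ℝ), ∀ (c : ℝ) (μ : ℝ → ℝ → ℝ), 0 ≤ c → c ≤ cstar →
      IsTravellingWave thmin thmax alpha r c μ →
      (∃ M : ℝ, ∀ ξ : ℝ, |∫ t in Set.Ioo thmin thmax, μ ξ t| ≤ M) →
      (∃ m > (0 : ℝ), ∀ ξ : ℝ, m ≤ ∫ t in Set.Ioo thmin thmax, μ ξ t) →
      ∀ ξ : ℝ, δ ≤ ∫ t in Set.Ioo thmin thmax, μ ξ t := by
  obtain ⟨hQc, hQpos, -, hQode, hQbc1, hQbc2⟩ := hQ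
  have hle : thmin ≤ thmax := hthth.le
  obtain ⟨θm, hθmmem, hθmmin⟩ :=
    isCompact_Icc.exists_isMinOn (nonempty_Icc.2 hle) hQc.continuous.continuousOn
  obtain ⟨θM, hθMmem, hθMmax⟩ :=
    isCompact_Icc.exists_isMaxOn (nonempty_Icc.2 hle) hQc.continuous.continuousOn
  obtain ⟨qmin, hqmindef⟩ : ∃ q : ℝ, q = Qstar θm := ⟨_, rfl⟩
  obtain ⟨qmax, hqmaxdef⟩ : ∃ q : ℝ, q = Qstar θM := ⟨_, rfl⟩
  have hqmin : 0 < qmin := hqmindef ▸ hQpos θm hθmmem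
  have hqmax : 0 < qmax := hqmaxdef ▸ hQpos θM hθMmem
  have hqminle : ∀ θ ∈ Icc thmin thmax, qmin ≤ Qstar θ := fun θ hθ => hqmindef ▸ hθmmin hθ
  have hqmaxle : ∀ θ ∈ Icc thmin thmax, Qstar θ ≤ qmax := fun θ hθ => hqmaxdef ▸ hθMmax hθ
  -- the constants of the key lemma
  obtain ⟨s, hsdef⟩ : ∃ s : ℝ, s = lamstar ^ 2 * thmin := ⟨_, rfl⟩
  obtain ⟨k, hkdef⟩ : ∃ k : ℝ, k = r / qmin := ⟨_, rfl⟩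
  have hs : 0 < s := hsdef ▸ mul_pos (pow_pos hlam 2) hth
  have hk : 0 < k := hkdef ▸ div_pos hr hqmin
  obtain ⟨δ, hδdef⟩ : ∃ δ : ℝ, δ = thmin ^ 2 * (s / (2 * k)) / (8 * thmax ^ 2) / qmax :=
    ⟨_, rfl⟩
  have hthmax : 0 < thmax := lt_trans hth hthth
  have hδpos : 0 < δ := by
    rw [hδdef]
    have h1 : 0 < s / (2 * k) := div_pos hs (by linarith)
    have h2 : 0 < thmin ^ 2 * (s / (2 * k)) / (8 * thmax ^ 2) :=
      div_pos (mul_pos (pow_pos hth 2) h1) (by nlinarith [pow_pos hthmax 2])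
    exact div_pos h2 hqmax
  refine ⟨δ, hδpos, ?_⟩
  intro c μ hc0 hccstar hTW hbdd hinf ξfin
  obtain ⟨hμ0, hμC2, ⟨M, hM⟩, hpde, hbc⟩ := hTW
  obtain ⟨m, hm0, hmle⟩ := hinf
  clear hbdd
  -- partial derivatives in the ξ direction
  have hFd : Differentiable ℝ (Function.uncurry μ) := hμC2.differentiable (by norm_num)
  have hG1 : ContDiff ℝ 1 (fun p : ℝ × ℝ => fderiv ℝ (Function.uncurry μ) p (1, 0)) :=
    (hμC2.fderiv_right (by norm_num)).clm_apply contDiff_const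
  obtain ⟨u1, hu1⟩ : ∃ u1 : ℝ → ℝ → ℝ,
      u1 = fun ξ θ => fderiv ℝ (Function.uncurry μ) (ξ, θ) (1, 0) := ⟨_, rfl⟩
  obtain ⟨u2, hu2⟩ : ∃ u2 : ℝ → ℝ → ℝ,
      u2 = fun ξ θ => fderiv ℝ (fun p : ℝ × ℝ => fderiv ℝ (Function.uncurry μ) p (1, 0))
        (ξ, θ) (1, 0) := ⟨_, rfl⟩
  have hprodd : ∀ (θ ξ : ℝ), HasDerivAt (fun x : ℝ => (x, θ)) ((1:ℝ), (0:ℝ)) ξ :=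
    fun θ ξ => (hasDerivAt_id ξ).prodMk (hasDerivAt_const ξ θ)
  have hu1d : ∀ θ ξ, HasDerivAt (fun x => μ x θ) (u1 ξ θ) ξ := by
    intro θ ξ
    have h := (hFd (ξ, θ)).hasFDerivAt.comp_hasDerivAt ξ (hprodd θ ξ)
    rw [hu1]
    exact h
  have hu2d : ∀ θ ξ, HasDerivAt (fun x => u1 x θ) (u2 ξ θ) ξ := by
    intro θ ξ
    have h := ((hG1.differentiable one_ne_zero) (ξ, θ)).hasFDerivAt.comp_hasDerivAt ξ (hprodd θ ξ)
    rw [hu1, hu2]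
    exact h
  have hnorm10 : ‖((1:ℝ), (0:ℝ))‖ = 1 := by
    rw [Prod.norm_def]
    simp
  have hbd1 : ∀ ξ θ, |u1 ξ θ| ≤ M := by
    intro ξ θ
    have h := hM 1 (by norm_num) (ξ, θ)
    have heq : u1 ξ θ = iteratedFDeriv ℝ 1 (Function.uncurry μ) (ξ, θ) ![(1, 0)] := by
      rw [hu1, iteratedFDeriv_one_apply]
      simp
    rw [← Real.norm_eq_abs, heq]
    calc ‖iteratedFDeriv ℝ 1 (Function.uncurry μ) (ξ, θ) ![(1, 0)]‖
        ≤ ‖iteratedFDeriv ℝ 1 (Function.uncurry μ) (ξ, θ)‖ * ∏ i, ‖(![((1:ℝ), (0:ℝ))]) i‖ :=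
          ContinuousMultilinearMap.le_opNorm _ _
      _ ≤ M := by
          simp only [Fin.prod_univ_one, Matrix.cons_val_zero, hnorm10, mul_one]
          exact h
  have hbd2 : ∀ ξ θ, |u2 ξ θ| ≤ M := by
    intro ξ θ
    have h := hM 2 (by norm_num) (ξ, θ)
    have hfd2 : Differentiable ℝ (fderiv ℝ (Function.uncurry μ)) :=
      (hμC2.fderiv_right (by norm_num : (1:WithTop ℕ∞) + 1 ≤ 2)).differentiable one_ne_zero
    have hGd : HasFDerivAt (fun p : ℝ × ℝ => fderiv ℝ (Function.uncurry μ) p (1, 0))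
        ((ContinuousLinearMap.apply ℝ ℝ ((1:ℝ), (0:ℝ))).comp
          (fderiv ℝ (fderiv ℝ (Function.uncurry μ)) (ξ, θ))) (ξ, θ) :=
      (ContinuousLinearMap.apply ℝ ℝ ((1:ℝ), (0:ℝ))).hasFDerivAt.comp (ξ, θ)
        (hfd2 (ξ, θ)).hasFDerivAt
    have heq : u2 ξ θ = iteratedFDeriv ℝ 2 (Function.uncurry μ) (ξ, θ) ![(1, 0), (1, 0)] := by
      simp only [hu2]
      rw [hGd.fderiv, iteratedFDeriv_two_apply]
      simp
    rw [← Real.norm_eq_abs, heq]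
    calc ‖iteratedFDeriv ℝ 2 (Function.uncurry μ) (ξ, θ) ![(1, 0), (1, 0)]‖
        ≤ ‖iteratedFDeriv ℝ 2 (Function.uncurry μ) (ξ, θ)‖ *
            ∏ i, ‖(![((1:ℝ), (0:ℝ)), ((1:ℝ), (0:ℝ))]) i‖ :=
          ContinuousMultilinearMap.le_opNorm _ _
      _ ≤ M := by
          simp only [Fin.prod_univ_two, Matrix.cons_val_zero, Matrix.cons_val_one,
            Matrix.head_cons, hnorm10, mul_one]
          exact h
  -- continuity facts
  have hμcont : Continuous (Function.uncurry μ) := hμC2.continuous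
  have hseccont : ∀ ξ, Continuous (fun θ => μ ξ θ) :=
    fun ξ => hμcont.comp (continuous_const.prodMk continuous_id)
  have hu1cont : ∀ ξ, Continuous (fun θ => u1 ξ θ) := by
    intro ξ
    simp only [hu1]
    exact hG1.continuous.comp (continuous_const.prodMk continuous_id)
  have hu2cont : ∀ ξ, Continuous (fun θ => u2 ξ θ) := by
    intro ξ
    simp only [hu2]
    exact ((ContinuousLinearMap.apply ℝ ℝ ((1:ℝ), (0:ℝ))).continuous.comp
      ((hG1.continuous_fderiv one_ne_zero).comp (continuous_const.prodMk continuous_id)))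
  -- sections in the θ direction
  have hsec : ∀ ξ, ContDiff ℝ 2 (fun t => μ ξ t) := by
    intro ξ
    exact hμC2.comp ((contDiff_const : ContDiff ℝ 2 (fun t : ℝ => ξ)).prodMk contDiff_id)
  have hsecd : ∀ ξ, Differentiable ℝ (fun t => μ ξ t) :=
    fun ξ => (hsec ξ).differentiable (by norm_num)
  have hsec1 : ∀ ξ, ContDiff ℝ 1 (deriv (fun t => μ ξ t)) := by
    intro ξ
    have h := hsec ξ
    rw [show (2 : WithTop ℕ∞) = 1 + 1 by norm_num] at h
    exact (contDiff_succ_iff_deriv.mp h).2.2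
  have hμi2 : ∀ ξ, iteratedDeriv 2 (fun t => μ ξ t) = deriv (deriv (fun t => μ ξ t)) := by
    intro ξ
    rw [show (2:ℕ) = 1 + 1 by norm_num, iteratedDeriv_succ, iteratedDeriv_one]
  have hμθθcont : ∀ ξ, Continuous (fun θ => iteratedDeriv 2 (fun t => μ ξ t) θ) := by
    intro ξ
    rw [hμi2 ξ]
    exact (hsec1 ξ).continuous_deriv le_rfl
  have hμθθd : ∀ ξ t, HasDerivAt (deriv (fun s => μ ξ s))
      (iteratedDeriv 2 (fun s => μ ξ s) t) t := by
    intro ξ t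
    rw [hμi2 ξ]
    exact (((hsec1 ξ).differentiable one_ne_zero) t).hasDerivAt
  -- same for Qstar
  have hQdiff : Differentiable ℝ Qstar := hQc.differentiable (by norm_num)
  have hQ1 : ContDiff ℝ 1 (deriv Qstar) := by
    have h := hQc
    rw [show (2 : WithTop ℕ∞) = 1 + 1 by norm_num] at h
    exact (contDiff_succ_iff_deriv.mp h).2.2
  have hQi2 : iteratedDeriv 2 Qstar = deriv (deriv Qstar) := by
    rw [show (2:ℕ) = 1 + 1 by norm_num, iteratedDeriv_succ, iteratedDeriv_one]
  have hQ2cont : Continuous (iteratedDeriv 2 Qstar) := by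
    rw [hQi2]
    exact hQ1.continuous_deriv le_rfl
  have hQ2d : ∀ t, HasDerivAt (deriv Qstar) (iteratedDeriv 2 Qstar t) t := by
    intro t
    rw [hQi2]
    exact ((hQ1.differentiable one_ne_zero) t).hasDerivAt
  have hQcont : Continuous Qstar := hQc.continuous
  -- the moment functions
  obtain ⟨P, hPdef⟩ : ∃ P : ℝ → ℝ,
      P = fun ξ => ∫ θ in Ioo thmin thmax, Qstar θ * μ ξ θ := ⟨_, rfl⟩
  obtain ⟨J, hJdef⟩ : ∃ J : ℝ → ℝ,
      J = fun ξ => ∫ θ in Ioo thmin thmax, (θ * Qstar θ) * μ ξ θ := ⟨_, rfl⟩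
  obtain ⟨P1, hP1def⟩ : ∃ P1 : ℝ → ℝ,
      P1 = fun ξ => ∫ θ in Ioo thmin thmax, Qstar θ * u1 ξ θ := ⟨_, rfl⟩
  obtain ⟨J1, hJ1def⟩ : ∃ J1 : ℝ → ℝ,
      J1 = fun ξ => ∫ θ in Ioo thmin thmax, (θ * Qstar θ) * u1 ξ θ := ⟨_, rfl⟩
  obtain ⟨J2, hJ2def⟩ : ∃ J2 : ℝ → ℝ,
      J2 = fun ξ => ∫ θ in Ioo thmin thmax, (θ * Qstar θ) * u2 ξ θ := ⟨_, rfl⟩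
  have hthQc : Continuous (fun θ : ℝ => θ * Qstar θ) := continuous_id.mul hQcont
  have hPd : ∀ ξ, HasDerivAt P (P1 ξ) ξ := by
    intro ξ
    rw [hPdef, hP1def]
    exact derivUnder16 thmin thmax Qstar (fun x θ => μ x θ) u1 M hQcont hseccont hu1cont
      hu1d hbd1 ξ
  have hJd : ∀ ξ, HasDerivAt J (J1 ξ) ξ := by
    intro ξ
    rw [hJdef, hJ1def]
    exact derivUnder16 thmin thmax (fun θ => θ * Qstar θ) (fun x θ => μ x θ) u1 M hthQc
      hseccont hu1cont hu1d hbd1 ξ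
  have hJ1d : ∀ ξ, HasDerivAt J1 (J2 ξ) ξ := by
    intro ξ
    rw [hJ1def, hJ2def]
    exact derivUnder16 thmin thmax (fun θ => θ * Qstar θ) (fun x θ => u1 x θ) u2 M hthQc
      hu1cont hu2cont hu2d hbd2 ξ
  have hioo : MeasurableSet (Ioo thmin thmax) := measurableSet_Ioo
  have hiccsub : Ioo thmin thmax ⊆ Icc thmin thmax := Ioo_subset_Icc_self
  have hintμ : ∀ ξ, IntegrableOn (fun θ => μ ξ θ) (Ioo thmin thmax) :=
    fun ξ => integrableOn16 (hseccont ξ)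
  have hintQμ : ∀ ξ, IntegrableOn (fun θ => Qstar θ * μ ξ θ) (Ioo thmin thmax) :=
    fun ξ => integrableOn16 (hQcont.mul (hseccont ξ))
  have hintθQμ : ∀ ξ, IntegrableOn (fun θ => (θ * Qstar θ) * μ ξ θ) (Ioo thmin thmax) :=
    fun ξ => integrableOn16 (hthQc.mul (hseccont ξ))
  have hν0 : ∀ ξ, 0 ≤ ∫ t in Ioo thmin thmax, μ ξ t :=
    fun ξ => setIntegral_nonneg hioo (fun θ hθ => hμ0 ξ θ (hiccsub hθ))
  have hPlow : ∀ ξ, qmin * (∫ t in Ioo thmin thmax, μ ξ t) ≤ P ξ := by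
    intro ξ
    simp only [hPdef]
    rw [← integral_const_mul]
    refine setIntegral_mono_on ((hintμ ξ).const_mul qmin) (hintQμ ξ) hioo ?_
    intro θ hθ
    exact mul_le_mul_of_nonneg_right (hqminle θ (hiccsub hθ)) (hμ0 ξ θ (hiccsub hθ))
  have hPhigh : ∀ ξ, P ξ ≤ qmax * (∫ t in Ioo thmin thmax, μ ξ t) := by
    intro ξ
    simp only [hPdef]
    rw [← integral_const_mul]
    refine setIntegral_mono_on (hintQμ ξ) ((hintμ ξ).const_mul qmax) hioo ?_
    intro θ hθ
    exact mul_le_mul_of_nonneg_right (hqmaxle θ (hiccsub hθ)) (hμ0 ξ θ (hiccsub hθ))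
  have hPm : ∀ ξ, qmin * m ≤ P ξ := by
    intro ξ
    refine le_trans ?_ (hPlow ξ)
    exact mul_le_mul_of_nonneg_left (hmle ξ) hqmin.le
  have hPpos : ∀ ξ, 0 < P ξ := fun ξ => lt_of_lt_of_le (mul_pos hqmin hm0) (hPm ξ)
  have hQμ0 : ∀ ξ, ∀ θ ∈ Ioo thmin thmax, 0 ≤ Qstar θ * μ ξ θ :=
    fun ξ θ hθ => mul_nonneg (hQpos θ (hiccsub hθ)).le (hμ0 ξ θ (hiccsub hθ))
  have hPJlow : ∀ ξ, thmin * P ξ ≤ J ξ := by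
    intro ξ
    simp only [hPdef, hJdef]
    rw [← integral_const_mul]
    refine setIntegral_mono_on ((hintQμ ξ).const_mul thmin) (hintθQμ ξ) hioo ?_
    intro θ hθ
    have h1 : thmin * (Qstar θ * μ ξ θ) ≤ θ * (Qstar θ * μ ξ θ) :=
      mul_le_mul_of_nonneg_right hθ.1.le (hQμ0 ξ θ hθ)
    calc thmin * (Qstar θ * μ ξ θ) ≤ θ * (Qstar θ * μ ξ θ) := h1
      _ = (θ * Qstar θ) * μ ξ θ := by ring
  have hPJhigh : ∀ ξ, J ξ ≤ thmax * P ξ := by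
    intro ξ
    simp only [hPdef, hJdef]
    rw [← integral_const_mul]
    refine setIntegral_mono_on (hintθQμ ξ) ((hintQμ ξ).const_mul thmax) hioo ?_
    intro θ hθ
    have h1 : θ * (Qstar θ * μ ξ θ) ≤ thmax * (Qstar θ * μ ξ θ) :=
      mul_le_mul_of_nonneg_right hθ.2.le (hQμ0 ξ θ hθ)
    calc (θ * Qstar θ) * μ ξ θ = θ * (Qstar θ * μ ξ θ) := by ring
      _ ≤ thmax * (Qstar θ * μ ξ θ) := h1
  -- integration by parts in θ
  have hIBP : ∀ ξ, (∫ θ in Ioo thmin thmax, Qstar θ * iteratedDeriv 2 (fun t => μ ξ t) θ)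
      = ∫ θ in Ioo thmin thmax, μ ξ θ * iteratedDeriv 2 Qstar θ := by
    intro ξ
    have hgd : ∀ t : ℝ, HasDerivAt
        (fun t => deriv (fun s => μ ξ s) t * Qstar t - μ ξ t * deriv Qstar t)
        (Qstar t * iteratedDeriv 2 (fun s => μ ξ s) t - μ ξ t * iteratedDeriv 2 Qstar t) t := by
      intro t
      have h1 := (hμθθd ξ t).mul ((hQdiff t).hasDerivAt)
      have h2 := (((hsecd ξ) t).hasDerivAt).mul (hQ2d t)
      have h3 := h1.sub h2
      exact h3.congr_deriv (by ring)
    have hcont : Continuous (fun t => Qstar t * iteratedDeriv 2 (fun s => μ ξ s) t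
        - μ ξ t * iteratedDeriv 2 Qstar t) :=
      (hQcont.mul (hμθθcont ξ)).sub ((hseccont ξ).mul hQ2cont)
    have hFTC := intervalIntegral.integral_eq_sub_of_hasDerivAt
      (f := fun t => deriv (fun s => μ ξ s) t * Qstar t - μ ξ t * deriv Qstar t)
      (fun t _ => hgd t) (hcont.intervalIntegrable thmin thmax)
    rw [(hbc ξ).1, (hbc ξ).2, hQbc1, hQbc2] at hFTC
    simp only [zero_mul, mul_zero, sub_zero, sub_self] at hFTC
    rw [intervalIntegral.integral_of_le hle, integral_Ioc_eq_integral_Ioo] at hFTC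
    rw [integral_sub (f := fun t => Qstar t * iteratedDeriv 2 (fun s => μ ξ s) t)
      (g := fun t => μ ξ t * iteratedDeriv 2 Qstar t) (integrableOn16 (hQcont.mul (hμθθcont ξ)))
      (integrableOn16 ((hseccont ξ).mul hQ2cont))] at hFTC
    linarith
  -- the eigenvalue identity
  have heig : ∀ ξ, (∫ θ in Ioo thmin thmax,
        Qstar θ * (alpha * iteratedDeriv 2 (fun t => μ ξ t) θ))
      = lamstar * cstar * P ξ - lamstar ^ 2 * J ξ - r * P ξ := by
    intro ξ
    have h0 : (∫ θ in Ioo thmin thmax, Qstar θ * (alpha * iteratedDeriv 2 (fun t => μ ξ t) θ))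
        = alpha * ∫ θ in Ioo thmin thmax, Qstar θ * iteratedDeriv 2 (fun t => μ ξ t) θ := by
      rw [← integral_const_mul]
      congr 1
      funext θ
      ring
    rw [h0, hIBP ξ, ← integral_const_mul]
    have h1 : EqOn (fun θ => alpha * (μ ξ θ * iteratedDeriv 2 Qstar θ))
        (fun θ => lamstar * cstar * (Qstar θ * μ ξ θ)
          - lamstar ^ 2 * ((θ * Qstar θ) * μ ξ θ) - r * (Qstar θ * μ ξ θ))
        (Ioo thmin thmax) := by
      intro θ hθ
      have h := hQode θ hθ
      simp only
      linear_combination (μ ξ θ) * h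
    rw [setIntegral_congr_fun hioo h1]
    have hI1 : IntegrableOn (fun θ => lamstar * cstar * (Qstar θ * μ ξ θ))
        (Ioo thmin thmax) := (hintQμ ξ).const_mul _
    have hI2 : IntegrableOn (fun θ => lamstar ^ 2 * ((θ * Qstar θ) * μ ξ θ))
        (Ioo thmin thmax) := (hintθQμ ξ).const_mul _
    have hI3 : IntegrableOn (fun θ => r * (Qstar θ * μ ξ θ))
        (Ioo thmin thmax) := (hintQμ ξ).const_mul _
    have hI12 : IntegrableOn (fun θ => lamstar * cstar * (Qstar θ * μ ξ θ)
        - lamstar ^ 2 * ((θ * Qstar θ) * μ ξ θ)) (Ioo thmin thmax) := hI1.sub hI2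
    rw [integral_sub hI12 hI3, integral_sub hI1 hI2,
      integral_const_mul, integral_const_mul, integral_const_mul]
    simp only [hPdef, hJdef]
  -- integrate the PDE against Qstar
  have hmain : ∀ ξ, c * P1 ξ + J2 ξ =
      lamstar ^ 2 * J ξ - lamstar * cstar * P ξ
        + r * (∫ t in Ioo thmin thmax, μ ξ t) * P ξ := by
    intro ξ
    have hptw : EqOn (fun θ => (r * (1 - ∫ t in Ioo thmin thmax, μ ξ t)) * (Qstar θ * μ ξ θ))
        (fun θ => -(c * (Qstar θ * u1 ξ θ)) - ((θ * Qstar θ) * u2 ξ θ)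
          - (Qstar θ * (alpha * iteratedDeriv 2 (fun t => μ ξ t) θ)))
        (Ioo thmin thmax) := by
      intro θ hθ
      have hp := hpde ξ θ hθ
      have e1 : deriv (fun x => μ x θ) ξ = u1 ξ θ := (hu1d θ ξ).deriv
      have e2 : iteratedDeriv 2 (fun x => μ x θ) ξ = u2 ξ θ := by
        have hd : deriv (fun x => μ x θ) = fun x => u1 x θ :=
          funext fun x => (hu1d θ x).deriv
        rw [show (2:ℕ) = 1 + 1 by norm_num, iteratedDeriv_succ, iteratedDeriv_one, hd]
        exact (hu2d θ ξ).deriv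
      rw [e1, e2] at hp
      simp only
      linear_combination (-(Qstar θ)) * hp
    have hInt := setIntegral_congr_fun (μ := volume) hioo hptw
    rw [integral_const_mul] at hInt
    have hA : IntegrableOn (fun θ => c * (Qstar θ * u1 ξ θ)) (Ioo thmin thmax) :=
      (integrableOn16 (hQcont.mul (hu1cont ξ))).const_mul _
    have hB : IntegrableOn (fun θ => (θ * Qstar θ) * u2 ξ θ) (Ioo thmin thmax) :=
      integrableOn16 (hthQc.mul (hu2cont ξ))
    have hC : IntegrableOn (fun θ => Qstar θ * (alpha * iteratedDeriv 2 (fun t => μ ξ t) θ))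
        (Ioo thmin thmax) :=
      integrableOn16 (hQcont.mul (continuous_const.mul (hμθθcont ξ)))
    have hAB : IntegrableOn (fun θ => -(c * (Qstar θ * u1 ξ θ)) - ((θ * Qstar θ) * u2 ξ θ))
        (Ioo thmin thmax) := hA.neg.sub hB
    have hAneg : IntegrableOn (fun θ => -(c * (Qstar θ * u1 ξ θ))) (Ioo thmin thmax) := hA.neg
    rw [integral_sub hAB hC, integral_sub hAneg hB, integral_neg, integral_const_mul] at hInt
    have heigξ := heig ξ
    simp only [hPdef, hJdef, hP1def, hJ1def, hJ2def]
    simp only [hPdef, hJdef] at heigξ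
    linear_combination hInt - heigξ
  have hPc : Continuous P := by
    have : Differentiable ℝ P := fun ξ => (hPd ξ).differentiableAt
    exact this.continuous
  obtain ⟨v, hvdef⟩ : ∃ v : ℝ → ℝ, v = fun ξ => J1 ξ + c * P ξ := ⟨_, rfl⟩
  have hJd' : ∀ ξ, HasDerivAt J (v ξ - c * P ξ) ξ := by
    intro ξ
    have h := hJd ξ
    have heq : v ξ - c * P ξ = J1 ξ := by simp only [hvdef]; ring
    rw [heq]
    exact h
  have hvd : ∀ ξ : ℝ, ∃ w, HasDerivAt v w ξ ∧ w ≤ k * P ξ ^ 2 - s * P ξ := by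
    intro ξ
    refine ⟨J2 ξ + c * P1 ξ, ?_, ?_⟩
    · rw [hvdef]
      exact (hJ1d ξ).add ((hPd ξ).const_mul c)
    · have hm' := hmain ξ
      have hb1 : r * (∫ t in Ioo thmin thmax, μ ξ t) * P ξ ≤ k * P ξ ^ 2 := by
        have hqk : qmin * k = r := by rw [hkdef]; field_simp
        have h2 : qmin * (∫ t in Ioo thmin thmax, μ ξ t) ≤ P ξ := hPlow ξ
        have h3 : qmin * (r * (∫ t in Ioo thmin thmax, μ ξ t) * P ξ)
            ≤ qmin * (k * P ξ ^ 2) := by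
          nlinarith [mul_le_mul_of_nonneg_right h2 (mul_nonneg hr.le (hPpos ξ).le),
            hPpos ξ, hν0 ξ]
        exact le_of_mul_le_mul_left h3 hqmin
      have hb2 : lamstar ^ 2 * J ξ - lamstar * cstar * P ξ ≤ -(s * P ξ) := by
        have h3 : lamstar ^ 2 * J ξ ≤ lamstar ^ 2 * (thmax * P ξ) :=
          mul_le_mul_of_nonneg_left (hPJhigh ξ) (sq_nonneg _)
        have h4 : lamstar * (lamstar * (thmax + thmin)) * P ξ ≤ lamstar * cstar * P ξ :=
          mul_le_mul_of_nonneg_right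
            (mul_le_mul_of_nonneg_left hcstar hlam.le) (hPpos ξ).le
        rw [hsdef]
        nlinarith [h3, h4]
      linarith
  have hfin := key16 thmin thmax c s k (qmin * m) P J v hth hle hc0 hs hk
    (mul_pos hqmin hm0) hPc hJd' hvd hPJlow hPJhigh hPm ξfin
  have hlast : P ξfin ≤ qmax * ∫ t in Ioo thmin thmax, μ ξfin t := hPhigh ξfin
  rw [hδdef, div_le_iff₀ hqmax]
  calc thmin ^ 2 * (s / (2 * k)) / (8 * thmax ^ 2) ≤ P ξfin := hfin
    _ ≤ (∫ t in Ioo thmin thmax, μ ξfin t) * qmax := by rw [mul_comm]; exact hlast
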